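/- Let R be a d×d real symmetric positive definite matrix with eigendecomposition R = V Λ Vᵀ (V orthogonal, eigenvalues λ_1 ≥ … ≥ λ_d > 0), let T > 0, and set R_ME = V(Λ + Γ)Vᵀ with Γ(k,k) = max(T − λ_k, 0). Define J(x) = ½(x − x_b)ᵀB⁻¹(x − x_b) + ½(y − h(x))ᵀR⁻¹(y − h(x)) and J_ME(x) = ½(x − x_b)ᵀB⁻¹(x − x_b) + ½(y − h(x))ᵀR_ME⁻¹(y − h(x)). Then for every x, J_ME(x) = J(x) − ½(y − h(x))ᵀ V Γ̃ Vᵀ (y − h(x)), where Γ̃ is the diagonal matrix with Γ̃(i,i) = 0 if λ_i ≥ T and Γ̃(i,i) = (T − λ_i)/(T·λ_i) if λ_i < T. -/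

import Mathlib

open Matrix BigOperators

lemma sandwich_inv_aux {d : ℕ} (V : Matrix (Fin d) (Fin d) ℝ) (f : Fin d → ℝ)
    (hV1 : V * Vᵀ = 1) (hV2 : Vᵀ * V = 1) (hf : ∀ i, f i ≠ 0) :
    (V * Matrix.diagonal f * Vᵀ)⁻¹ = V * Matrix.diagonal (fun i => (f i)⁻¹) * Vᵀ := by
  apply Matrix.inv_eq_right_inv
  have hdd : Matrix.diagonal f * Matrix.diagonal (fun i => (f i)⁻¹) = 1 := by
    rw [Matrix.diagonal_mul_diagonal]
    rw [show (fun i => f i * (f i)⁻¹) = fun _ => (1:ℝ) from funext fun i => mul_inv_cancel₀ (hf i)]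
    exact Matrix.diagonal_one
  calc V * Matrix.diagonal f * Vᵀ * (V * Matrix.diagonal (fun i => (f i)⁻¹) * Vᵀ)
      = V * Matrix.diagonal f * (Vᵀ * V) * Matrix.diagonal (fun i => (f i)⁻¹) * Vᵀ := by
        noncomm_ring
    _ = V * (Matrix.diagonal f * Matrix.diagonal (fun i => (f i)⁻¹)) * Vᵀ := by
        rw [hV2]; noncomm_ring
    _ = 1 := by rw [hdd, Matrix.mul_one, hV1]

/-- applying the minimum eigenvalue method to the observation error
covariance matrix changes the 3D-Var objective function by subtracting
`½(y − h(x))ᵀ V Γ̃ Vᵀ (y − h(x))`, where `Γ̃(i,i) = 0` if `λᵢ ≥ T` and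
`Γ̃(i,i) = (T − λᵢ)/(T λᵢ)` if `λᵢ < T`. -/
theorem minimum_eigenvalue_objective_function_update
    {n d : ℕ} (R V : Matrix (Fin d) (Fin d) ℝ) (lam : Fin d → ℝ)
    (hV1 : V * Vᵀ = 1) (hV2 : Vᵀ * V = 1)
    (hdec : Antitone lam) (hpos : ∀ i, 0 < lam i)
    (hR : R = V * Matrix.diagonal lam * Vᵀ)
    (T : ℝ) (hT : 0 < T)
    (RME : Matrix (Fin d) (Fin d) ℝ)
    (hRME : RME = V * (Matrix.diagonal lam
        + Matrix.diagonal fun k => max (T - lam k) 0) * Vᵀ)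
    (B : Matrix (Fin n) (Fin n) ℝ) (hB : IsUnit B.det)
    (xb : Fin n → ℝ) (y : Fin d → ℝ) (h : (Fin n → ℝ) → Fin d → ℝ)
    (J JME : (Fin n → ℝ) → ℝ)
    (hJ : J = fun x => (1 / 2) * ((x - xb) ⬝ᵥ B⁻¹.mulVec (x - xb))
        + (1 / 2) * ((y - h x) ⬝ᵥ R⁻¹.mulVec (y - h x)))
    (hJME : JME = fun x => (1 / 2) * ((x - xb) ⬝ᵥ B⁻¹.mulVec (x - xb))
        + (1 / 2) * ((y - h x) ⬝ᵥ RME⁻¹.mulVec (y - h x))) :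
    ∀ x, JME x = J x - (1 / 2) * ((y - h x) ⬝ᵥ
      (V * Matrix.diagonal
          (fun i => if T ≤ lam i then 0 else (T - lam i) / (T * lam i)) * Vᵀ).mulVec
        (y - h x)) := by
  intro x
  -- rewrite RME as sandwich of diagonal of max
  have hmax : Matrix.diagonal lam + (Matrix.diagonal fun k => max (T - lam k) 0)
      = Matrix.diagonal (fun k => max (lam k) T) := by
    rw [Matrix.diagonal_add, Matrix.diagonal_eq_diagonal_iff]
    intro k
    rcases le_total T (lam k) with hk | hk
    · rw [max_eq_left hk, max_eq_right (by linarith), add_zero]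
    · rw [max_eq_right hk, max_eq_left (by linarith)]; ring
  have hRinv : R⁻¹ = V * Matrix.diagonal (fun i => (lam i)⁻¹) * Vᵀ := by
    rw [hR]; exact sandwich_inv_aux V lam hV1 hV2 (fun i => (hpos i).ne')
  have hRMEinv : RME⁻¹ = V * Matrix.diagonal (fun i => (max (lam i) T)⁻¹) * Vᵀ := by
    rw [hRME, hmax]
    exact sandwich_inv_aux V _ hV1 hV2
      (fun i => (lt_max_of_lt_right hT).ne')
  have hkey : RME⁻¹ = R⁻¹ - V * Matrix.diagonal
      (fun i => if T ≤ lam i then 0 else (T - lam i) / (T * lam i)) * Vᵀ := by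
    rw [hRinv, hRMEinv]
    have : Matrix.diagonal (fun i => (max (lam i) T)⁻¹)
        = Matrix.diagonal (fun i => (lam i)⁻¹)
          - Matrix.diagonal (fun i => if T ≤ lam i then 0 else (T - lam i) / (T * lam i)) := by
      rw [Matrix.diagonal_sub, Matrix.diagonal_eq_diagonal_iff]
      intro i
      rcases le_or_gt T (lam i) with hk | hk
      · rw [max_eq_left hk, if_pos hk, sub_zero]
      · rw [max_eq_right hk.le, if_neg (not_le.mpr hk)]
        have h1 : lam i ≠ 0 := (hpos i).ne'
        have h2 : T ≠ 0 := hT.ne'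
        field_simp
        ring
    rw [this, Matrix.mul_sub, Matrix.sub_mul]
  rw [hJ, hJME, hkey]
  simp only [Matrix.sub_mulVec, dotProduct_sub]
  ring
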